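/- For every real y > 0, D_r(iy)^{−1} · D_l(iy) = 1 − e^{2πi(iny − β/2)}, and for every real y < 0, D_r(iy)^{−1} · D_l(iy) = 1 − e^{−2πi(iny − β/2)}; i.e., the jump of D across the imaginary axis, with D₊ the limiting value from the left half-plane (where D = D_l) and D₋ the limiting value from the right half-plane (where D = D_r), equals 1 − e^{±2iπ(nz−β/2)} for ±Im z > 0. -/

import Mathlib

open Complex Filter Topology

/-- `D_r(z) := e^{nz} Γ(nz − β/2 + 1) / (√(2π) (nz)^{nz+(1−β)/2})`, the formula defining
`D(z)` for `Re z > 0`, using principal branches of complex powers. -/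
noncomputable def Dright (β : ℝ) (n : ℕ) (z : ℂ) : ℂ :=
  Complex.exp ((n : ℂ) * z) * Complex.Gamma ((n : ℂ) * z - (β : ℂ) / 2 + 1) /
    ((Real.sqrt (2 * Real.pi) : ℂ) *
      ((n : ℂ) * z) ^ ((n : ℂ) * z + (1 - (β : ℂ)) / 2))

/-- `D_l(z) := √(2π) (−nz)^{−nz+(β−1)/2} / (e^{−nz} Γ(−nz + β/2))`, the formula defining
`D(z)` for `Re z < 0`, using principal branches of complex powers. -/
noncomputable def Dleft (β : ℝ) (n : ℕ) (z : ℂ) : ℂ :=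
  (Real.sqrt (2 * Real.pi) : ℂ) *
      (-(n : ℂ) * z) ^ (-(n : ℂ) * z + ((β : ℂ) - 1) / 2) /
    (Complex.exp (-(n : ℂ) * z) * Complex.Gamma (-(n : ℂ) * z + (β : ℂ) / 2))

private lemma cpow_jump_pos (t : ℝ) (ht : 0 < t) (a : ℂ) :
    (I * (t : ℂ)) ^ a * (-(I * (t : ℂ))) ^ (-a) =
      Complex.exp ((Real.pi : ℂ) * I * a) := by
  have htne : ((t : ℂ)) ≠ 0 := ofReal_ne_zero.2 ht.ne'
  have h1 : I * (t : ℂ) ≠ 0 := mul_ne_zero I_ne_zero htne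
  have h2 : -(I * (t : ℂ)) ≠ 0 := neg_ne_zero.2 h1
  have l1 : Complex.log (I * (t : ℂ)) = (Real.log t : ℂ) + ((Real.pi / 2 : ℝ) : ℂ) * I := by
    rw [show Complex.log (I * (t : ℂ)) =
        (Real.log ‖I * (t : ℂ)‖ : ℂ) + arg (I * (t : ℂ)) * I from rfl]
    rw [show I * (t : ℂ) = (t : ℂ) * I by ring, arg_real_mul I ht, arg_I]
    simp [abs_of_pos ht]
  have l2 : Complex.log (-(I * (t : ℂ))) = (Real.log t : ℂ) - ((Real.pi / 2 : ℝ) : ℂ) * I := by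
    rw [show Complex.log (-(I * (t : ℂ))) =
        (Real.log ‖-(I * (t : ℂ))‖ : ℂ) + arg (-(I * (t : ℂ))) * I from rfl]
    rw [show -(I * (t : ℂ)) = (t : ℂ) * (-I) by ring, arg_real_mul (-I) ht, arg_neg_I]
    push_cast
    simp [abs_of_pos ht]
    ring
  rw [Complex.cpow_def_of_ne_zero h1, Complex.cpow_def_of_ne_zero h2, ← Complex.exp_add,
    l1, l2]
  congr 1
  push_cast
  ring

private lemma cpow_jump_neg (t : ℝ) (ht : t < 0) (a : ℂ) :
    (I * (t : ℂ)) ^ a * (-(I * (t : ℂ))) ^ (-a) =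
      Complex.exp (-((Real.pi : ℂ) * I * a)) := by
  have h := cpow_jump_pos (-t) (by linarith) (-a)
  push_cast at h
  rw [show I * -(t : ℂ) = -(I * (t : ℂ)) by ring, neg_neg, neg_neg, mul_comm] at h
  rw [h]
  congr 1
  ring

private lemma gamma_jump (s : ℂ) (hs : s ≠ 0) :
    Complex.Gamma (s + 1) * Complex.Gamma (-s) =
      -((Real.pi : ℂ) / Complex.sin ((Real.pi : ℂ) * s)) := by
  have h1 : Complex.Gamma (s + 1) = s * Complex.Gamma s := Complex.Gamma_add_one s hs
  have h2 : Complex.Gamma (-s + 1) = -s * Complex.Gamma (-s) :=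
    Complex.Gamma_add_one (-s) (neg_ne_zero.2 hs)
  have h3 := Complex.Gamma_mul_Gamma_one_sub s
  rw [show (1 : ℂ) - s = -s + 1 by ring, h2] at h3
  rw [h1]
  linear_combination -h3

private lemma sin_jump_ne (s : ℂ) (hs : s.im ≠ 0) :
    Complex.sin ((Real.pi : ℂ) * s) ≠ 0 := by
  intro h
  obtain ⟨k, hk⟩ := Complex.sin_eq_zero_iff.mp h
  apply hs
  have := congrArg Complex.im hk
  simp [Complex.mul_im] at this
  exact this

private lemma alg_jump_pos (s : ℂ) (h : Complex.sin ((Real.pi : ℂ) * s) ≠ 0) :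
    (2 * (Real.pi : ℂ)) * Complex.exp ((Real.pi : ℂ) * I * (s + 1 / 2)) /
        (-((Real.pi : ℂ) / Complex.sin ((Real.pi : ℂ) * s))) =
      1 - Complex.exp (2 * (Real.pi : ℂ) * I * s) := by
  have hπ : ((Real.pi : ℝ) : ℂ) ≠ 0 := ofReal_ne_zero.2 Real.pi_ne_zero
  have hu : Complex.exp ((Real.pi : ℂ) * I * s) ≠ 0 := Complex.exp_ne_zero _
  have eI : Complex.exp (((Real.pi : ℂ)) / 2 * I) = I := by
    rw [Complex.exp_mul_I]; simp
  have e1 : Complex.exp ((Real.pi : ℂ) * I * (s + 1 / 2)) =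
      Complex.exp ((Real.pi : ℂ) * I * s) * I := by
    rw [show (Real.pi : ℂ) * I * (s + 1 / 2) =
      (Real.pi : ℂ) * I * s + (Real.pi : ℂ) / 2 * I by ring, Complex.exp_add, eI]
  have e2 : Complex.sin ((Real.pi : ℂ) * s) =
      ((Complex.exp ((Real.pi : ℂ) * I * s))⁻¹ - Complex.exp ((Real.pi : ℂ) * I * s)) * I / 2 := by
    rw [show Complex.sin ((Real.pi : ℂ) * s) =
        (Complex.exp (-((Real.pi : ℂ) * s) * I) - Complex.exp (((Real.pi : ℂ) * s) * I)) * I / 2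
        from rfl,
      show -((Real.pi : ℂ) * s) * I = -((Real.pi : ℂ) * I * s) by ring,
      show ((Real.pi : ℂ) * s) * I = (Real.pi : ℂ) * I * s by ring, Complex.exp_neg]
  have e3 : Complex.exp (2 * (Real.pi : ℂ) * I * s) = Complex.exp ((Real.pi : ℂ) * I * s) ^ 2 := by
    rw [show 2 * (Real.pi : ℂ) * I * s = (Real.pi : ℂ) * I * s + (Real.pi : ℂ) * I * s by ring,
      Complex.exp_add, sq]
  rw [e2] at h ⊢
  rw [e1, e3]
  field_simp
  ring_nf
  rw [Complex.I_sq]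
  ring

private lemma alg_jump_neg (s : ℂ) (h : Complex.sin ((Real.pi : ℂ) * s) ≠ 0) :
    (2 * (Real.pi : ℂ)) * Complex.exp (-((Real.pi : ℂ) * I * (s + 1 / 2))) /
        (-((Real.pi : ℂ) / Complex.sin ((Real.pi : ℂ) * s))) =
      1 - Complex.exp (-(2 * (Real.pi : ℂ) * I * s)) := by
  have hπ : ((Real.pi : ℝ) : ℂ) ≠ 0 := ofReal_ne_zero.2 Real.pi_ne_zero
  have hu : Complex.exp ((Real.pi : ℂ) * I * s) ≠ 0 := Complex.exp_ne_zero _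
  have eI : Complex.exp (-((Real.pi : ℂ) / 2 * I)) = -I := by
    rw [show -((Real.pi : ℂ) / 2 * I) = -((Real.pi : ℂ) / 2) * I by ring, Complex.exp_mul_I]
    simp
  have e1 : Complex.exp (-((Real.pi : ℂ) * I * (s + 1 / 2))) =
      (Complex.exp ((Real.pi : ℂ) * I * s))⁻¹ * (-I) := by
    rw [show -((Real.pi : ℂ) * I * (s + 1 / 2)) =
      -((Real.pi : ℂ) * I * s) + -((Real.pi : ℂ) / 2 * I) by ring, Complex.exp_add, eI,
      Complex.exp_neg]
  have e2 : Complex.sin ((Real.pi : ℂ) * s) =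
      ((Complex.exp ((Real.pi : ℂ) * I * s))⁻¹ - Complex.exp ((Real.pi : ℂ) * I * s)) * I / 2 := by
    rw [show Complex.sin ((Real.pi : ℂ) * s) =
        (Complex.exp (-((Real.pi : ℂ) * s) * I) - Complex.exp (((Real.pi : ℂ) * s) * I)) * I / 2
        from rfl,
      show -((Real.pi : ℂ) * s) * I = -((Real.pi : ℂ) * I * s) by ring,
      show ((Real.pi : ℂ) * s) * I = (Real.pi : ℂ) * I * s by ring, Complex.exp_neg]
  have e3 : Complex.exp (-(2 * (Real.pi : ℂ) * I * s)) =
      ((Complex.exp ((Real.pi : ℂ) * I * s))⁻¹) ^ 2 := by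
    rw [show -(2 * (Real.pi : ℂ) * I * s) =
        -((Real.pi : ℂ) * I * s) + -((Real.pi : ℂ) * I * s) by ring,
      Complex.exp_add, Complex.exp_neg, sq]
  rw [e2] at h ⊢
  rw [e1, e3]
  field_simp
  ring_nf
  rw [Complex.I_sq]
  ring
private lemma Dreduce (β : ℝ) (n : ℕ) (z : ℂ) :
    (Dright β n z)⁻¹ * Dleft β n z =
      (2 * (Real.pi : ℂ)) *
          (((n : ℂ) * z) ^ ((n : ℂ) * z + (1 - (β : ℂ)) / 2) *
            (-((n : ℂ) * z)) ^ (-((n : ℂ) * z + (1 - (β : ℂ)) / 2))) /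
        (Complex.Gamma ((n : ℂ) * z - (β : ℂ) / 2 + 1) *
          Complex.Gamma (-((n : ℂ) * z - (β : ℂ) / 2))) := by
  have hsq : ((Real.sqrt (2 * Real.pi) : ℝ) : ℂ) * ((Real.sqrt (2 * Real.pi) : ℝ) : ℂ)
      = 2 * (Real.pi : ℂ) := by
    rw [← ofReal_mul, Real.mul_self_sqrt (by positivity)]
    push_cast; ring
  have h1 : -(n : ℂ) * z + ((β : ℂ) - 1) / 2 = -((n : ℂ) * z + (1 - (β : ℂ)) / 2) := by ring
  have h2 : -(n : ℂ) * z + (β : ℂ) / 2 = -((n : ℂ) * z - (β : ℂ) / 2) := by ring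
  have h3 : -(n : ℂ) * z = -((n : ℂ) * z) := by ring
  unfold Dright Dleft
  rw [h1, h2, h3, inv_div, div_mul_div_comm]
  rw [show ((Real.sqrt (2 * Real.pi) : ℝ) : ℂ) *
        ((n : ℂ) * z) ^ ((n : ℂ) * z + (1 - (β : ℂ)) / 2) *
        (((Real.sqrt (2 * Real.pi) : ℝ) : ℂ) *
          (-((n : ℂ) * z)) ^ (-((n : ℂ) * z + (1 - (β : ℂ)) / 2))) =
      (2 * (Real.pi : ℂ)) *
        (((n : ℂ) * z) ^ ((n : ℂ) * z + (1 - (β : ℂ)) / 2) *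
          (-((n : ℂ) * z)) ^ (-((n : ℂ) * z + (1 - (β : ℂ)) / 2)))
      from by rw [← hsq]; ring]
  congr 1
  rw [show Complex.exp ((n : ℂ) * z) * Complex.Gamma ((n : ℂ) * z - (β : ℂ) / 2 + 1) *
        (Complex.exp (-((n : ℂ) * z)) * Complex.Gamma (-((n : ℂ) * z - (β : ℂ) / 2))) =
      (Complex.exp ((n : ℂ) * z) * Complex.exp (-((n : ℂ) * z))) *
        (Complex.Gamma ((n : ℂ) * z - (β : ℂ) / 2 + 1) *
          Complex.Gamma (-((n : ℂ) * z - (β : ℂ) / 2))) from by ring]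
  rw [← Complex.exp_add]
  simp

/-- The jump of `D` across the imaginary axis:
`D₋(z)⁻¹ D₊(z) = 1 − e^{±2iπ(nz−β/2)}` for `±Im z > 0`, where `D₊ = D_l` (limit from the
left half-plane) and `D₋ = D_r` (limit from the right half-plane). -/
theorem D_jump (β : ℝ) (hβ1 : 1 ≤ β) (hβ2 : β < 2) (n : ℕ) (hn : 1 ≤ n) :
    (∀ y : ℝ, 0 < y →
      (Dright β n (Complex.I * (y : ℂ)))⁻¹ * Dleft β n (Complex.I * (y : ℂ)) =
        1 - Complex.exp (2 * (Real.pi : ℂ) * Complex.I *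
          ((n : ℂ) * (Complex.I * (y : ℂ)) - (β : ℂ) / 2))) ∧
    (∀ y : ℝ, y < 0 →
      (Dright β n (Complex.I * (y : ℂ)))⁻¹ * Dleft β n (Complex.I * (y : ℂ)) =
        1 - Complex.exp (-(2 * (Real.pi : ℂ) * Complex.I *
          ((n : ℂ) * (Complex.I * (y : ℂ)) - (β : ℂ) / 2)))) := by
  have hnpos : (0 : ℝ) < n := by exact_mod_cast Nat.lt_of_lt_of_le Nat.zero_lt_one hn
  have key : ∀ y : ℝ, y ≠ 0 →
      ((n : ℂ) * (Complex.I * (y : ℂ)) - (β : ℂ) / 2).im = n * y ∧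
      (n : ℂ) * (Complex.I * (y : ℂ)) = Complex.I * (((n : ℝ) * y : ℝ) : ℂ) := by
    intro y hy
    constructor
    · simp
    · push_cast; ring
  constructor
  · intro y hy
    set s : ℂ := (n : ℂ) * (Complex.I * (y : ℂ)) - (β : ℂ) / 2 with hs_def
    obtain ⟨him, hw⟩ := key y hy.ne'
    have hsim : s.im ≠ 0 := by rw [hs_def, him]; positivity
    have hs0 : s ≠ 0 := fun h => hsim (by rw [h]; rfl)
    have hsin := sin_jump_ne s hsim
    rw [Dreduce, hw,
      show Complex.I * (((n : ℝ) * y : ℝ) : ℂ) + (1 - (β : ℂ)) / 2 = s + 1 / 2 by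
        rw [hs_def, hw]; ring,
      show Complex.I * (((n : ℝ) * y : ℝ) : ℂ) - (β : ℂ) / 2 + 1 = s + 1 by
        rw [hs_def, hw],
      show -(Complex.I * (((n : ℝ) * y : ℝ) : ℂ) - (β : ℂ) / 2) = -s by
        rw [hs_def, hw],
      cpow_jump_pos ((n : ℝ) * y) (by positivity) (s + 1 / 2),
      gamma_jump s hs0]
    exact alg_jump_pos s hsin
  · intro y hy
    set s : ℂ := (n : ℂ) * (Complex.I * (y : ℂ)) - (β : ℂ) / 2 with hs_def
    obtain ⟨him, hw⟩ := key y hy.ne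
    have hsim : s.im ≠ 0 := by
      rw [hs_def, him]
      exact (mul_neg_of_pos_of_neg hnpos hy).ne
    have hs0 : s ≠ 0 := fun h => hsim (by rw [h]; rfl)
    have hsin := sin_jump_ne s hsim
    rw [Dreduce, hw,
      show Complex.I * (((n : ℝ) * y : ℝ) : ℂ) + (1 - (β : ℂ)) / 2 = s + 1 / 2 by
        rw [hs_def, hw]; ring,
      show Complex.I * (((n : ℝ) * y : ℝ) : ℂ) - (β : ℂ) / 2 + 1 = s + 1 by
        rw [hs_def, hw],
      show -(Complex.I * (((n : ℝ) * y : ℝ) : ℂ) - (β : ℂ) / 2) = -s by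
        rw [hs_def, hw],
      cpow_jump_neg ((n : ℝ) * y) (mul_neg_of_pos_of_neg hnpos hy) (s + 1 / 2),
      gamma_jump s hs0]
    exact alg_jump_neg s hsin
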